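/- Let N ≥ 1 be a natural number and let M be the N×N real symmetric tridiagonal matrix with M_{ii} = 2 for 1 ≤ i ≤ N−1, M_{NN} = 1, and M_{i,i+1} = M_{i+1,i} = −1 for 1 ≤ i ≤ N−1. Then the smallest eigenvalue of M equals 2 − 2cos(π/(2N+1)). -/

import Mathlib

open Matrix Finset

namespace TridiagThm5Aux

noncomputable def th (N : ℕ) : ℝ := Real.pi / (2 * N + 1)
noncomputable def w (N j : ℕ) : ℝ := Real.sin ((j + 1) * th N)
noncomputable def lam (N : ℕ) : ℝ := 2 - 2 * Real.cos (th N)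
noncomputable def dd (N j : ℕ) : ℝ := if j = N - 1 then 1 else 2

lemma den_pos (N : ℕ) : (0:ℝ) < 2 * N + 1 := by positivity

lemma th_pos (N : ℕ) : 0 < th N := div_pos Real.pi_pos (den_pos N)

lemma w_pos {N j : ℕ} (hj : j < N) : 0 < w N j := by
  apply Real.sin_pos_of_pos_of_lt_pi
  · exact mul_pos (by positivity) (th_pos N)
  · have h1 : ((j:ℝ) + 1) ≤ N := by exact_mod_cast hj
    have hpi := Real.pi_pos
    rw [th]
    calc ((j:ℝ)+1) * (Real.pi / (2*N+1)) < (2*(N:ℝ)+1) * (Real.pi / (2*N+1)) := by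
          apply mul_lt_mul_of_pos_right _ (div_pos hpi (den_pos N))
          linarith
      _ = Real.pi := by field_simp

lemma trig1 (N : ℕ) (a : ℝ) :
    Real.sin (a - th N) + Real.sin (a + th N) = 2 * Real.cos (th N) * Real.sin a := by
  rw [Real.sin_sub, Real.sin_add]; ring

lemma trig2 (N : ℕ) : Real.sin ((N + 1) * th N) = Real.sin (N * th N) := by
  have h : ((N:ℝ) + 1) * th N = Real.pi - N * th N := by
    rw [th]
    have := (den_pos N).ne'
    field_simp
    ring
  rw [h, Real.sin_pi_sub]

lemma rec_eq {N : ℕ} (hN : 1 ≤ N) {j : ℕ} (hj : j < N) :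
    (dd N j - lam N) * w N j =
      (if j = 0 then 0 else w N (j - 1)) + (if j = N - 1 then 0 else w N (j + 1)) := by
  by_cases hjN : j = N - 1
  · rw [if_pos hjN]
    by_cases hj0 : j = 0
    · have hN1 : N = 1 := by omega
      subst hN1; subst hj0
      rw [if_pos rfl]
      have hth : th 1 = Real.pi / 3 := by rw [th]; norm_num
      rw [dd, lam, hth, Real.cos_pi_div_three]
      norm_num
    · rw [if_neg hj0, dd, if_pos hjN, lam]
      have hN2 : 2 ≤ N := by omega
      have e1 : ((j:ℝ) + 1) = N := by
        have : j + 1 = N := by omega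
        exact_mod_cast congrArg (Nat.cast (R := ℝ)) this
      have e2 : ((j - 1 : ℕ):ℝ) + 1 = (N:ℝ) - 1 := by
        have : (j - 1) + 1 = N - 1 := by omega
        have h2 : (((j-1)+1 : ℕ):ℝ) = ((N - 1 : ℕ):ℝ) := by rw [this]
        push_cast [Nat.cast_sub (by omega : 1 ≤ N)] at h2 ⊢
        linarith
      rw [w, w, e1, e2]
      have t1 := trig1 N ((N:ℝ) * th N)
      have t2 := trig2 N
      have e3 : (N:ℝ) * th N - th N = ((N:ℝ) - 1) * th N := by ring
      have e4 : (N:ℝ) * th N + th N = ((N:ℝ) + 1) * th N := by ring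
      rw [e3, e4, t2] at t1
      linarith
  · rw [if_neg hjN, dd, if_neg hjN, lam]
    have t1 := trig1 N (((j:ℝ) + 1) * th N)
    have e3 : ((j:ℝ) + 1) * th N - th N = (j:ℝ) * th N := by ring
    have e4 : ((j:ℝ) + 1) * th N + th N = ((j:ℝ) + 2) * th N := by ring
    rw [e3, e4] at t1
    by_cases hj0 : j = 0
    · subst hj0
      rw [if_pos rfl, w, w]
      norm_num at t1 ⊢
      linarith
    · rw [if_neg hj0, w, w, w]
      have e2 : ((j - 1 : ℕ):ℝ) + 1 = (j:ℝ) := by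
        push_cast [Nat.cast_sub (by omega : 1 ≤ j)]; ring
      have e5 : ((j + 1 : ℕ):ℝ) + 1 = (j:ℝ) + 2 := by push_cast; ring
      rw [e2, e5]
      linarith

lemma sum_formula {N : ℕ} (v : ℕ → ℝ) (hv : ∀ n, N ≤ n → v n = 0) {a : ℕ} (ha : a < N) :
    ∑ j ∈ range N, (if a = j then dd N a else if a + 1 = j ∨ j + 1 = a then -1 else 0) * v j
      = dd N a * v a - (if a = 0 then 0 else v (a - 1)) - v (a + 1) := by
  have key : ∀ j : ℕ,
      (if a = j then dd N a else if a + 1 = j ∨ j + 1 = a then -1 else 0) * v j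
        = (if j = a then dd N a * v a else 0) + (if j = a + 1 then -v j else 0)
          + (if j + 1 = a then -v j else 0) := by
    intro j
    by_cases h2 : a + 1 = j
    · rw [if_neg (show ¬ a = j by omega), if_pos (Or.inl h2),
        if_neg (show ¬ j = a by omega), if_pos (show j = a + 1 by omega),
        if_neg (show ¬ j + 1 = a by omega)]
      ring
    · by_cases h3 : j + 1 = a
      · rw [if_neg (show ¬ a = j by omega), if_pos (Or.inr h3),
          if_neg (show ¬ j = a by omega), if_neg (show ¬ j = a + 1 by omega), if_pos h3]
        ring
      · by_cases h1 : a = j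
        · subst h1
          rw [if_pos rfl, if_pos rfl, if_neg (show ¬ a = a + 1 by omega),
            if_neg (show ¬ a + 1 = a by omega)]
          ring
        · rw [if_neg h1, if_neg (show ¬ (a + 1 = j ∨ j + 1 = a) by tauto),
            if_neg (show ¬ j = a by omega), if_neg (show ¬ j = a + 1 by omega), if_neg h3]
          ring
  rw [Finset.sum_congr rfl (fun j _ => key j), Finset.sum_add_distrib, Finset.sum_add_distrib,
    Finset.sum_ite_eq' (range N) a, Finset.sum_ite_eq' (range N) (a+1)]
  have h1 : (if a ∈ range N then dd N a * v a else 0) = dd N a * v a := by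
    rw [if_pos (mem_range.2 ha)]
  have h2 : (if a + 1 ∈ range N then -v (a+1) else 0) = -v (a+1) := by
    by_cases h : a + 1 < N
    · rw [if_pos (mem_range.2 h)]
    · rw [if_neg (fun hh => h (mem_range.1 hh)), hv _ (by omega)]; ring
  have h3 : (∑ j ∈ range N, if j + 1 = a then -v j else 0)
      = -(if a = 0 then 0 else v (a - 1)) := by
    by_cases h0 : a = 0
    · subst h0
      rw [if_pos rfl, Finset.sum_eq_zero (fun j _ => by rw [if_neg (by omega)])]; ring
    · obtain ⟨b, rfl⟩ : ∃ b, a = b + 1 := ⟨a - 1, by omega⟩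
      rw [if_neg h0]
      have : ∀ j, (if j + 1 = b + 1 then -v j else 0) = (if j = b then -v j else 0) := by
        intro j
        by_cases h : j = b
        · rw [if_pos (by omega), if_pos h]
        · rw [if_neg (by omega), if_neg h]
      rw [Finset.sum_congr rfl (fun j _ => this j), Finset.sum_ite_eq' (range N) b,
        if_pos (mem_range.2 (by omega))]
      norm_num
  rw [h1, h2, h3]
  ring

lemma mulVec_eq {N : ℕ} (M : Matrix (Fin N) (Fin N) ℝ)
    (hM : M = Matrix.of (fun i j : Fin N =>
      if i = j then (if i.val = N - 1 then 1 else 2)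
      else if i.val + 1 = j.val ∨ j.val + 1 = i.val then -1 else 0))
    (x : Fin N → ℝ) (X : ℕ → ℝ) (hX : ∀ n, X n = if h : n < N then x ⟨n, h⟩ else 0)
    (i : Fin N) :
    (M *ᵥ x) i = dd N i.val * X i.val - (if i.val = 0 then 0 else X (i.val - 1))
      - X (i.val + 1) := by
  have hX0 : ∀ n, N ≤ n → X n = 0 := by
    intro n hn; rw [hX, dif_neg (by omega)]
  have hXv : ∀ j : Fin N, X j.val = x j := by
    intro j; rw [hX, dif_pos j.isLt]
  rw [← sum_formula X hX0 i.isLt]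
  subst hM
  rw [mulVec, dotProduct]
  rw [← Fin.sum_univ_eq_sum_range
    (fun j => (if i.val = j then dd N i.val else
      if i.val + 1 = j ∨ j + 1 = i.val then -1 else 0) * X j) N]
  apply Finset.sum_congr rfl
  intro j _
  rw [hXv j]
  congr 1
  simp only [of_apply, Fin.ext_iff, dd]

lemma symm_eq {N : ℕ} (M : Matrix (Fin N) (Fin N) ℝ)
    (hM : M = Matrix.of (fun i j : Fin N =>
      if i = j then (if i.val = N - 1 then 1 else 2)
      else if i.val + 1 = j.val ∨ j.val + 1 = i.val then -1 else 0)) :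
    Mᵀ = M := by
  subst hM
  ext i j
  simp only [transpose_apply, of_apply]
  by_cases h : i = j
  · subst h; rfl
  · rw [if_neg (show ¬ j = i from fun hh => h hh.symm), if_neg h]
    by_cases h2 : (j:ℕ) + 1 = (i:ℕ) ∨ (i:ℕ) + 1 = (j:ℕ)
    · rw [if_pos h2, if_pos (by tauto)]
    · rw [if_neg h2, if_neg (by tauto)]

lemma eigen {N : ℕ} (hN : 1 ≤ N) (M : Matrix (Fin N) (Fin N) ℝ)
    (hM : M = Matrix.of (fun i j : Fin N =>
      if i = j then (if i.val = N - 1 then 1 else 2)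
      else if i.val + 1 = j.val ∨ j.val + 1 = i.val then -1 else 0)) :
    M *ᵥ (fun i : Fin N => w N i.val) = lam N • (fun i : Fin N => w N i.val) := by
  funext i
  set X : ℕ → ℝ := fun n => if h : n < N then w N n else 0 with hXdef
  rw [mulVec_eq M hM _ X (fun n => rfl) i]
  have hiN : i.val < N := i.isLt
  have h1 : X i.val = w N i.val := dif_pos hiN
  have h3 : X (i.val + 1) = if i.val = N - 1 then 0 else w N (i.val + 1) := by
    by_cases h : i.val = N - 1
    · rw [if_pos h, hXdef]; exact dif_neg (by omega)
    · rw [if_neg h, hXdef]; exact dif_pos (by omega)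
  have hrec := rec_eq hN hiN
  simp only [Pi.smul_apply, smul_eq_mul]
  rw [h1, h3]
  by_cases h0 : i.val = 0
  · rw [if_pos h0]
    rw [if_pos h0] at hrec
    linear_combination hrec
  · rw [if_neg h0, show X (i.val - 1) = w N (i.val - 1) from dif_pos (by omega)]
    rw [if_neg h0] at hrec
    linear_combination hrec

lemma quad {N : ℕ} (hN : 1 ≤ N) (M : Matrix (Fin N) (Fin N) ℝ)
    (hM : M = Matrix.of (fun i j : Fin N =>
      if i = j then (if i.val = N - 1 then 1 else 2)
      else if i.val + 1 = j.val ∨ j.val + 1 = i.val then -1 else 0))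
    (x : Fin N → ℝ) :
    lam N * (x ⬝ᵥ x) ≤ x ⬝ᵥ (M *ᵥ x) := by
  classical
  obtain ⟨m, rfl⟩ : ∃ m, N = m + 1 := ⟨N - 1, by omega⟩
  set X : ℕ → ℝ := fun n => if h : n < (m+1) then x ⟨n, h⟩ else 0 with hXdef
  have hX : ∀ n, X n = if h : n < (m+1) then x ⟨n, h⟩ else 0 := fun n => rfl
  set Y : ℕ → ℝ := fun n => X n / w (m+1) n with hYdef
  have hXY : ∀ n, X n = w (m+1) n * Y n := by
    intro n
    by_cases h : n < (m+1)
    · rw [hYdef]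
      rw [eq_comm, mul_comm, div_mul_cancel₀ _ (w_pos h).ne']
    · have : X n = 0 := by rw [hX, dif_neg h]
      simp [hYdef, this]
  have hdot1 : x ⬝ᵥ x = ∑ i ∈ range (m+1), X i * X i := by
    rw [dotProduct, ← Fin.sum_univ_eq_sum_range (fun n => X n * X n) (m+1)]
    apply Finset.sum_congr rfl
    intro j _
    rw [hX, dif_pos j.isLt]
  have hdot2 : x ⬝ᵥ (M *ᵥ x) = ∑ i ∈ range (m+1),
      X i * (dd (m+1) i * X i - (if i = 0 then 0 else X (i - 1)) - X (i + 1)) := by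
    rw [dotProduct, ← Fin.sum_univ_eq_sum_range
      (fun n => X n * (dd (m+1) n * X n - (if n = 0 then 0 else X (n - 1)) - X (n + 1))) (m+1)]
    apply Finset.sum_congr rfl
    intro j _
    rw [mulVec_eq M hM x X hX j, hX j.val, dif_pos j.isLt]
  rw [hdot1, hdot2, ← sub_nonneg, Finset.mul_sum, ← Finset.sum_sub_distrib]
  have key : ∀ i ∈ range (m+1),
      X i * (dd (m+1) i * X i - (if i = 0 then 0 else X (i - 1)) - X (i + 1))
        - lam (m+1) * (X i * X i)
      = ((if i = 0 then 0 else w (m+1) (i - 1) * (w (m+1) i * (Y i * Y i)))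
          + (if i = (m+1) - 1 then 0 else w (m+1) (i + 1)) * (w (m+1) i * (Y i * Y i)))
        - (if i = 0 then 0 else w (m+1) (i - 1) * Y (i - 1)) * (w (m+1) i * Y i)
        - (w (m+1) i * Y i) * (w (m+1) (i + 1) * Y (i + 1)) := by
    intro i hi
    have hiN : i < (m+1) := mem_range.1 hi
    have hrec := rec_eq hN hiN
    have e1 : X i * (dd (m+1) i * X i - (if i = 0 then 0 else X (i - 1)) - X (i + 1))
        - lam (m+1) * (X i * X i)
        = ((dd (m+1) i - lam (m+1)) * w (m+1) i) * (w (m+1) i * (Y i * Y i))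
          - (if i = 0 then 0 else X (i - 1)) * X i - X i * X (i + 1) := by
      rw [hXY i]; ring
    rw [e1, hrec, hXY (i-1), hXY (i+1), hXY i]
    by_cases h0 : i = 0
    · simp only [if_pos h0]; ring
    · simp only [if_neg h0]; ring
  rw [Finset.sum_congr rfl key]
  rw [show ∀ f g h k : ℕ → ℝ, (∑ i ∈ range (m+1), ((f i + g i) - h i - k i))
      = ((∑ i ∈ range (m+1), f i) + (∑ i ∈ range (m+1), g i)) - (∑ i ∈ range (m+1), h i)
        - (∑ i ∈ range (m+1), k i) from fun f g h k => by
    rw [Finset.sum_sub_distrib, Finset.sum_sub_distrib, Finset.sum_add_distrib]]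
  have hT1 : (∑ i ∈ range (m+1), if i = 0 then 0 else w (m+1) (i - 1) * (w (m+1) i * (Y i * Y i)))
      = ∑ i ∈ range m, w (m+1) i * w (m+1) (i + 1) * (Y (i + 1) * Y (i + 1)) := by
    rw [Finset.sum_range_succ']
    simp only [Nat.succ_ne_zero, if_false, eq_self_iff_true, if_true, add_zero,
      Nat.add_sub_cancel]
    apply Finset.sum_congr rfl; intro i _; ring
  have hT2 : (∑ i ∈ range (m+1), (if i = (m+1) - 1 then 0 else w (m+1) (i + 1)) * (w (m+1) i * (Y i * Y i)))
      = ∑ i ∈ range m, w (m+1) i * w (m+1) (i + 1) * (Y i * Y i) := by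
    rw [Finset.sum_range_succ, if_pos (by omega : m = (m+1) - 1), zero_mul, add_zero]
    apply Finset.sum_congr rfl
    intro i hi
    rw [if_neg (by have := mem_range.1 hi; omega)]
    ring
  have hT3 : (∑ i ∈ range (m+1), (if i = 0 then 0 else w (m+1) (i - 1) * Y (i - 1)) * (w (m+1) i * Y i))
      = ∑ i ∈ range m, (w (m+1) i * w (m+1) (i + 1)) * (Y i * Y (i + 1)) := by
    rw [Finset.sum_range_succ']
    simp only [Nat.succ_ne_zero, if_false, eq_self_iff_true, if_true, zero_mul, add_zero,
      Nat.add_sub_cancel]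
    apply Finset.sum_congr rfl; intro i _; ring
  have hT4 : (∑ i ∈ range (m+1), (w (m+1) i * Y i) * (w (m+1) (i + 1) * Y (i + 1)))
      = ∑ i ∈ range m, (w (m+1) i * w (m+1) (i + 1)) * (Y i * Y (i + 1)) := by
    rw [Finset.sum_range_succ]
    have hYm : Y (m + 1) = 0 := by
      rw [hYdef]
      have : X (m + 1) = 0 := by rw [hX, dif_neg (by omega)]
      simp [this]
    rw [hYm]
    simp only [mul_zero, add_zero]
    apply Finset.sum_congr rfl; intro i _; ring
  rw [hT1, hT2, hT3, hT4, ← Finset.sum_add_distrib, ← Finset.sum_sub_distrib,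
    ← Finset.sum_sub_distrib]
  apply Finset.sum_nonneg
  intro i hi
  have hi' : i < m := mem_range.1 hi
  have h1 : 0 < w (m+1) i := w_pos (by omega)
  have h2 : 0 < w (m+1) (i + 1) := w_pos (by omega)
  have : w (m+1) i * w (m+1) (i + 1) * (Y (i + 1) * Y (i + 1)) + w (m+1) i * w (m+1) (i + 1) * (Y i * Y i)
      - w (m+1) i * w (m+1) (i + 1) * (Y i * Y (i + 1)) - w (m+1) i * w (m+1) (i + 1) * (Y i * Y (i + 1))
      = (w (m+1) i * w (m+1) (i + 1)) * (Y i - Y (i + 1))^2 := by ring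
  rw [this]
  positivity

end TridiagThm5Aux

open TridiagThm5Aux in
/-- Case 2/3 in the proof of the paper's Theorem 5: the `N×N` real symmetric
tridiagonal matrix with diagonal `(2, …, 2, 1)` and off-diagonal entries `-1`
(i.e. `Δ + |0⟩⟨0|` with `Δ` the path Laplacian) has smallest eigenvalue
`2 - 2cos(π/(2N+1))`. -/
theorem tridiag_smallest_eigenvalue_one_end (N : ℕ) (hN : 1 ≤ N)
    (M : Matrix (Fin N) (Fin N) ℝ)
    (hM : M = Matrix.of (fun i j : Fin N =>
      if i = j then (if i.val = N - 1 then 1 else 2)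
      else if i.val + 1 = j.val ∨ j.val + 1 = i.val then -1 else 0))
    (hHerm : M.IsHermitian) :
    (∃ i, hHerm.eigenvalues i = 2 - 2 * Real.cos (Real.pi / (2 * N + 1))) ∧
    (∀ i, 2 - 2 * Real.cos (Real.pi / (2 * N + 1)) ≤ hHerm.eigenvalues i) := by
  have hlam : (2 : ℝ) - 2 * Real.cos (Real.pi / (2 * N + 1)) = lam N := rfl
  rw [hlam]
  constructor
  · -- existence
    by_contra hcon
    push_neg at hcon
    set b := hHerm.eigenvectorBasis with hb
    set wv : Fin N → ℝ := fun i : Fin N => w N i.val with hwv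
    have heig : M *ᵥ wv = lam N • wv := eigen hN M hM
    have hzero : ∀ i, (⇑(b i)) ⬝ᵥ wv = 0 := by
      intro i
      have h1 : ⇑(b i) ⬝ᵥ (M *ᵥ wv) = lam N * (⇑(b i) ⬝ᵥ wv) := by
        rw [heig, dotProduct_smul, smul_eq_mul]
      have h2 : ⇑(b i) ⬝ᵥ (M *ᵥ wv) = hHerm.eigenvalues i * (⇑(b i) ⬝ᵥ wv) := by
        rw [Matrix.dotProduct_mulVec, ← Matrix.mulVec_transpose, symm_eq M hM,
          hHerm.mulVec_eigenvectorBasis i, smul_dotProduct, smul_eq_mul]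
      have h3 : (hHerm.eigenvalues i - lam N) * (⇑(b i) ⬝ᵥ wv) = 0 := by
        rw [sub_mul, h1.symm.trans h2]; ring
      rcases mul_eq_zero.1 h3 with h | h
      · exact absurd (sub_eq_zero.1 h) (hcon i)
      · exact h
    have hWzero : wv = 0 := by
      have hWrep := b.sum_repr' (WithLp.toLp 2 wv : EuclideanSpace ℝ (Fin N))
      have hinner : ∀ i, (inner ℝ (b i) (WithLp.toLp 2 wv : EuclideanSpace ℝ (Fin N)) : ℝ) = 0 := by
        intro i
        rw [← hzero i]
        simp [PiLp.inner_apply, RCLike.inner_apply, dotProduct, conj_trivial, mul_comm]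
      rw [Finset.sum_congr rfl (fun i _ => by rw [hinner i, zero_smul])] at hWrep
      rw [Finset.sum_const_zero] at hWrep
      simpa using congrArg WithLp.ofLp hWrep.symm
    have h0 : wv ⟨0, by omega⟩ = 0 := by rw [hWzero]; rfl
    exact absurd h0 (w_pos (by omega : (0:ℕ) < N)).ne'
  · -- lower bound
    intro i
    have hb := hHerm.mulVec_eigenvectorBasis i
    set v : Fin N → ℝ := ⇑(hHerm.eigenvectorBasis i) with hv
    have hvv : v ⬝ᵥ v = 1 := by
      have hn : ‖hHerm.eigenvectorBasis i‖ = 1 := hHerm.eigenvectorBasis.orthonormal.1 i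
      have : (inner ℝ (hHerm.eigenvectorBasis i) (hHerm.eigenvectorBasis i) : ℝ) = 1 := by
        rw [real_inner_self_eq_norm_mul_norm, hn]; norm_num
      rw [← this]
      simp only [PiLp.inner_apply, RCLike.inner_apply, conj_trivial, dotProduct]
      rfl
    have hq := quad hN M hM v
    rw [hb, dotProduct_smul, smul_eq_mul, hvv] at hq
    linarith
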